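/- With φ the inverse Zhukovskii function on D = ℂ̂ \ [−1,1] (normalized φ(z)/z → 2 at ∞) and real parameters A_1<B_1<⋯<A_k<B_k<−1, 1<A_{k+1}<⋯<A_m<B_m, the function w(z) = ∏_{j=1}^m ((A_j − 1/φ(z))/(B_j − 1/φ(z)))^{1/2} admits a single-valued holomorphic branch on D, and its value at ∞ equals ∏_{j=1}^m √(A_j/B_j) > 0 for an appropriate choice of branch. -/

import Mathlib

open Filter Bornology
open Topology

/-- The segment `E = [-1,1]` viewed inside `ℂ`. -/
noncomputable def segE : Set ℂ := (fun x : ℝ => (x : ℂ)) '' Set.Icc (-1) 1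

lemma mem_segE_iff {z : ℂ} : z ∈ segE ↔ z.im = 0 ∧ -1 ≤ z.re ∧ z.re ≤ 1 := by
  constructor
  · rintro ⟨x, hx, rfl⟩
    simpa using hx
  · rintro ⟨h0, h1, h2⟩
    exact ⟨z.re, ⟨h1, h2⟩, by simp [Complex.ext_iff, h0.symm]⟩

lemma segEc_of_im {z : ℂ} (h : z.im ≠ 0) : z ∈ segEᶜ := by
  simp [mem_segE_iff, h]

lemma segEc_of_re_gt {z : ℂ} (h : 1 < z.re) : z ∈ segEᶜ := by
  simp only [Set.mem_compl_iff, mem_segE_iff]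
  rintro ⟨-, -, h2⟩; linarith

lemma segEc_of_re_lt {z : ℂ} (h : z.re < -1) : z ∈ segEᶜ := by
  simp only [Set.mem_compl_iff, mem_segE_iff]
  rintro ⟨-, h1, -⟩; linarith

lemma joined_seg {x y : ℂ}
    (h : ∀ a b : ℝ, 0 ≤ a → 0 ≤ b → a + b = 1 → a • x + b • y ∈ segEᶜ) :
    JoinedIn segEᶜ x y := by
  apply JoinedIn.of_segment_subset
  rw [segment_eq_image₂]
  rintro z ⟨⟨a, b⟩, ⟨ha, hb, hab⟩, rfl⟩
  exact h a b ha hb hab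

lemma isPreconnected_segEc : IsPreconnected segEᶜ := by
  have base : ∀ z ∈ segEᶜ, JoinedIn segEᶜ z (2 + 2 * Complex.I) := by
    intro z hz
    have hz' : z.im ≠ 0 ∨ 1 < z.re ∨ z.re < -1 := by
      by_contra hcon
      push_neg at hcon
      exact hz (mem_segE_iff.mpr ⟨hcon.1, hcon.2.2, hcon.2.1⟩)
    have him : ∀ a b : ℝ, (a • z + b • (2 + 2 * Complex.I)).im = a * z.im + b * 2 := by
      intro a b; simp [Complex.add_im, Complex.smul_im]
    have hre : ∀ a b : ℝ, (a • z + b • (2 + 2 * Complex.I)).re = a * z.re + b * 2 := by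
      intro a b; simp [Complex.add_re, Complex.smul_re]
    rcases hz' with h | h | h
    · rcases h.lt_or_gt with h | h
      · -- im z < 0 : go to 2 - 2I, then up
        have j1 : JoinedIn segEᶜ z (2 - 2 * Complex.I) := by
          apply joined_seg
          intro a b ha hb hab
          apply segEc_of_im
          have : (a • z + b • (2 - 2 * Complex.I)).im = a * z.im + b * (-2) := by
            simp [Complex.add_im, Complex.smul_im]
          rw [this]
          rcases ha.eq_or_lt with h0 | h0
          · nlinarith
          · nlinarith
        have j2 : JoinedIn segEᶜ (2 - 2 * Complex.I) (2 + 2 * Complex.I) := by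
          apply joined_seg
          intro a b ha hb hab
          apply segEc_of_re_gt
          have : (a • (2 - 2*Complex.I) + b • (2 + 2 * Complex.I)).re = a * 2 + b * 2 := by
            simp [Complex.add_re, Complex.smul_re]
          rw [this]; nlinarith
        exact j1.trans j2
      · apply joined_seg
        intro a b ha hb hab
        apply segEc_of_im
        rw [him]
        rcases ha.eq_or_lt with h0 | h0
        · nlinarith
        · nlinarith
    · apply joined_seg
      intro a b ha hb hab
      apply segEc_of_re_gt
      rw [hre]
      rcases ha.eq_or_lt with h0 | h0
      · nlinarith
      · nlinarith
    · -- re z < -1 : go to -2+2I then across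
      have j1 : JoinedIn segEᶜ z (-2 + 2 * Complex.I) := by
        apply joined_seg
        intro a b ha hb hab
        apply segEc_of_re_lt
        have : (a • z + b • (-2 + 2 * Complex.I)).re = a * z.re + b * (-2) := by
          simp [Complex.add_re, Complex.smul_re]
        rw [this]
        rcases ha.eq_or_lt with h0 | h0
        · nlinarith
        · nlinarith
      have j2 : JoinedIn segEᶜ (-2 + 2 * Complex.I) (2 + 2 * Complex.I) := by
        apply joined_seg
        intro a b ha hb hab
        apply segEc_of_im
        have : (a • (-2 + 2*Complex.I) + b • (2 + 2 * Complex.I)).im = a * 2 + b * 2 := by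
          simp [Complex.add_im, Complex.smul_im]
        rw [this]; nlinarith
      exact j1.trans j2
  have hpc : IsPathConnected segEᶜ := by
    refine ⟨2 + 2 * Complex.I, segEc_of_im (by simp), ?_⟩
    intro y hy
    exact (base y hy).symm
  exact hpc.isConnected.isPreconnected

lemma div_slit_of_pos_re {u v : ℂ} (hu : 0 < u.re) (hv : 0 < v.re) :
    u / v ∈ Complex.slitPlane := by
  have hv0 : v ≠ 0 := fun h => by simp [h] at hv
  rw [Complex.mem_slitPlane_iff]
  by_cases him : (u / v).im = 0
  · left
    have hu' : u = (u / v) * v := (div_mul_cancel₀ u hv0).symm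
    have hre : u.re = (u / v).re * v.re := by
      conv_lhs => rw [hu']
      simp [Complex.mul_re, him]
    rcases lt_or_ge 0 ((u / v).re) with h | h
    · exact h
    · exfalso; nlinarith [mul_nonpos_of_nonpos_of_nonneg h hv.le]
  · right; exact him

lemma ratio_slit {u v : ℂ}
    (h : (0 < u.re ∧ 0 < v.re) ∨ (u.re < 0 ∧ v.re < 0)) :
    u / v ∈ Complex.slitPlane := by
  rcases h with ⟨h1, h2⟩ | ⟨h1, h2⟩
  · exact div_slit_of_pos_re h1 h2
  · rw [← neg_div_neg_eq]
    exact div_slit_of_pos_re (by simp only [Complex.neg_re]; linarith)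
      (by simp only [Complex.neg_re]; linarith)

/-- with `φ = z + s z` the inverse Zhukovskii function on
`D = ℂ \ [-1,1]` and interlacing real parameters `A_j, B_j` outside `[-1,1]`,
the function `w(z) = ∏_j ((A_j - 1/φ(z))/(B_j - 1/φ(z)))^{1/2}` has a single-valued
holomorphic branch on `D` whose value at `∞` (as a limit) is
`∏_j √(A_j/B_j) > 0`. -/
theorem holomorphic_branch_of_w
    (s : ℂ → ℂ)
    (hs : DifferentiableOn ℂ s segEᶜ)
    (hsq : ∀ z ∈ segEᶜ, s z ^ 2 = z ^ 2 - 1)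
    (hnorm : Tendsto (fun z => s z / z) (cobounded ℂ ⊓ 𝓟 segEᶜ) (nhds 1))
    (m k : ℕ) (hkm : k ≤ m) (A B : Fin m → ℝ)
    (hAB : ∀ j, A j < B j)
    (hord : ∀ i j : Fin m, i < j → B i < A j)
    (hneg : ∀ j : Fin m, (j : ℕ) < k → B j < -1)
    (hpos : ∀ j : Fin m, k ≤ (j : ℕ) → 1 < A j) :
    0 < ∏ j, Real.sqrt (A j / B j) ∧
    ∃ w : ℂ → ℂ,
      DifferentiableOn ℂ w segEᶜ ∧
      (∀ z ∈ segEᶜ,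
        w z ^ 2 = ∏ j, (((A j : ℂ) - 1 / (z + s z)) / ((B j : ℂ) - 1 / (z + s z)))) ∧
      Tendsto w (cobounded ℂ ⊓ 𝓟 segEᶜ)
        (nhds ((∏ j, Real.sqrt (A j / B j) : ℝ) : ℂ)) := by
  -- sign facts
  have hAB1 : ∀ j : Fin m, (1 < A j ∧ 1 < B j) ∨ (A j < -1 ∧ B j < -1) := by
    intro j
    rcases lt_or_ge (j : ℕ) k with h | h
    · right; exact ⟨(hAB j).trans (hneg j h), hneg j h⟩
    · left; exact ⟨hpos j h, (hpos j h).trans (hAB j)⟩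
  have hcpos : ∀ j : Fin m, 0 < A j / B j := by
    intro j
    rcases hAB1 j with ⟨h1, h2⟩ | ⟨h1, h2⟩
    · exact div_pos (by linarith) (by linarith)
    · exact div_pos_of_neg_of_neg (by linarith) (by linarith)
  have hprodpos : 0 < ∏ j, Real.sqrt (A j / B j) :=
    Finset.prod_pos fun j _ => Real.sqrt_pos.mpr (hcpos j)
  refine ⟨hprodpos, ?_⟩
  set l := cobounded ℂ ⊓ 𝓟 segEᶜ with hl
  set ψ : ℂ → ℂ := fun z => z - s z with hψdef
  have hmul : ∀ z ∈ segEᶜ, (z + s z) * ψ z = 1 := by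
    intro z hz
    show (z + s z) * (z - s z) = 1
    linear_combination -(hsq z hz)
  have hφ0 : ∀ z ∈ segEᶜ, z + s z ≠ 0 := by
    intro z hz h0
    have h := hmul z hz
    rw [h0, zero_mul] at h
    exact one_ne_zero h.symm
  have hinv : ∀ z ∈ segEᶜ, 1 / (z + s z) = ψ z := fun z hz =>
    (eq_one_div_of_mul_eq_one_left (by rw [mul_comm]; exact hmul z hz)).symm
  -- |ψ z| ≠ 1 on the complement
  have habs_ne : ∀ z ∈ segEᶜ, ‖ψ z‖ ≠ 1 := by
    intro z hz h1
    set u := z + s z with hu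
    have huabs : ‖u‖ = 1 := by
      have h := congrArg norm (hmul z hz)
      rw [norm_mul, h1, mul_one, norm_one] at h
      exact h
    have hu0 : u ≠ 0 := hφ0 z hz
    have hconj : ψ z = (starRingEnd ℂ) u := by
      have h2 : u * (starRingEnd ℂ) u = 1 := by
        rw [Complex.mul_conj, Complex.normSq_eq_norm_sq, huabs]
        norm_num
      exact mul_left_cancel₀ hu0 ((hmul z hz).trans h2.symm)
    have hz_eq : z = (u.re : ℂ) := by
      have h4 : u + (starRingEnd ℂ) u = 2 * z := by
        rw [← hconj]
        show (z + s z) + (z - s z) = 2 * z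
        ring
      rw [Complex.add_conj] at h4
      have : (2 : ℂ) * (u.re : ℂ) = 2 * z := by
        rw [← h4]; push_cast; ring
      have h5 := mul_left_cancel₀ (two_ne_zero (α := ℂ)) this
      exact h5.symm
    apply hz
    rw [hz_eq]
    refine mem_segE_iff.mpr ⟨by simp, ?_, ?_⟩
    · simpa using neg_le_of_abs_le ((Complex.abs_re_le_norm u).trans huabs.le)
    · simpa using le_of_abs_le ((Complex.abs_re_le_norm u).trans huabs.le)
  -- membership and nontriviality of the filter
  have hmemD : ∀ᶠ z in l, z ∈ segEᶜ :=
    eventually_inf_principal.mpr (Eventually.of_forall fun z hz => hz)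
  have hDcob : segEᶜ ∈ cobounded ℂ :=
    Bornology.isBounded_def.mp (isCompact_Icc.image Complex.continuous_ofReal).isBounded
  have hlne : l.NeBot := by
    rw [hl, inf_principal_neBot_iff]
    intro U hU
    exact Filter.nonempty_of_mem (inter_mem hU hDcob)
  -- ψ tends to 0 at infinity
  have hφtend : Tendsto (fun z => z + s z) l (cobounded ℂ) := by
    rw [← tendsto_norm_atTop_iff_cobounded]
    have h1 : Tendsto (fun z : ℂ => ‖z‖) l atTop :=
      tendsto_norm_cobounded_atTop.comp (tendsto_inf_left tendsto_id)
    have h2 : Tendsto (fun z : ℂ => ‖1 + s z / z‖) l (𝓝 2) := by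
      have h3 : Tendsto (fun z : ℂ => 1 + s z / z) l (𝓝 (1 + 1)) :=
        tendsto_const_nhds.add hnorm
      have h4 := h3.norm
      norm_num at h4
      exact h4
    have h3 : Tendsto (fun z : ℂ => ‖z‖ * ‖1 + s z / z‖) l atTop :=
      Filter.Tendsto.atTop_mul_pos (by norm_num) h1 h2
    apply h3.congr'
    have hz0 : ∀ᶠ z : ℂ in l, z ≠ 0 := by
      filter_upwards [tendsto_inf_left tendsto_id |>.eventually
        (eventually_cobounded_le_norm 1)] with z hz h0
      rw [h0] at hz; norm_num at hz
    filter_upwards [hz0] with z hz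
    rw [← norm_mul]
    congr 1
    field_simp
  have hψ0 : Tendsto ψ l (𝓝 0) := by
    have h4 : Tendsto (fun z => (z + s z)⁻¹) l (𝓝 0) := tendsto_inv₀_cobounded.comp hφtend
    apply h4.congr'
    filter_upwards [hmemD] with z hz
    rw [← hinv z hz, one_div]
  -- strict bound |ψ| < 1 on the complement, by connectedness
  have habs_lt : ∀ z ∈ segEᶜ, ‖ψ z‖ < 1 := by
    have hcont : ContinuousOn (fun z => ‖ψ z‖) segEᶜ :=
      continuous_norm.comp_continuousOn (continuousOn_id.sub hs.continuousOn)
    have hev : ∀ᶠ z in l, ‖ψ z‖ < 1 := by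
      have h5 : Tendsto (fun z => ‖ψ z‖) l (𝓝 0) := by
        simpa using hψ0.norm
      exact h5.eventually (eventually_lt_nhds one_pos)
    obtain ⟨a, ha1, ha2⟩ := (hev.and hmemD).exists
    intro z hz
    rcases lt_or_ge (‖ψ z‖) 1 with h | h
    · exact h
    exfalso
    have h1 : (1 : ℝ) ∈ Set.Icc (‖ψ a‖) (‖ψ z‖) := ⟨ha1.le, h⟩
    obtain ⟨c, hc, hc1⟩ := isPreconnected_segEc.intermediate_value ha2 hz hcont h1
    exact habs_ne c hc hc1
  -- sign of real parts
  have hre_sign : ∀ z ∈ segEᶜ, ∀ j : Fin m,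
      (0 < ((A j : ℂ) - ψ z).re ∧ 0 < ((B j : ℂ) - ψ z).re) ∨
      (((A j : ℂ) - ψ z).re < 0 ∧ ((B j : ℂ) - ψ z).re < 0) := by
    intro z hz j
    have hψre : |(ψ z).re| < 1 := lt_of_le_of_lt (Complex.abs_re_le_norm _) (habs_lt z hz)
    have h1 := abs_lt.mp hψre
    rcases hAB1 j with ⟨hA1, hB1⟩ | ⟨hA1, hB1⟩
    · left
      constructor
      · simp only [Complex.sub_re, Complex.ofReal_re]; linarith
      · simp only [Complex.sub_re, Complex.ofReal_re]; linarith
    · right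
      constructor
      · simp only [Complex.sub_re, Complex.ofReal_re]; linarith
      · simp only [Complex.sub_re, Complex.ofReal_re]; linarith
  have hAne : ∀ z ∈ segEᶜ, ∀ j : Fin m, ((A j : ℂ) - ψ z) ≠ 0 := by
    intro z hz j h0
    rcases hre_sign z hz j with ⟨h1, -⟩ | ⟨h1, -⟩ <;> rw [h0] at h1 <;> simp at h1
  have hBne : ∀ z ∈ segEᶜ, ∀ j : Fin m, ((B j : ℂ) - ψ z) ≠ 0 := by
    intro z hz j h0
    rcases hre_sign z hz j with ⟨-, h1⟩ | ⟨-, h1⟩ <;> rw [h0] at h1 <;> simp at h1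
  set F : Fin m → ℂ → ℂ := fun j z => ((A j : ℂ) - ψ z) / ((B j : ℂ) - ψ z) with hF
  have hFslit : ∀ z ∈ segEᶜ, ∀ j : Fin m, F j z ∈ Complex.slitPlane := by
    intro z hz j
    exact ratio_slit (hre_sign z hz j)
  have hF0 : ∀ z ∈ segEᶜ, ∀ j : Fin m, F j z ≠ 0 :=
    fun z hz j => Complex.slitPlane_ne_zero (hFslit z hz j)
  have hψdiff : DifferentiableOn ℂ ψ segEᶜ := differentiableOn_id.sub hs
  have hFdiff : ∀ j : Fin m, DifferentiableOn ℂ (F j) segEᶜ := fun j =>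
    ((differentiableOn_const _).sub hψdiff).div ((differentiableOn_const _).sub hψdiff)
      (fun z hz => hBne z hz j)
  refine ⟨fun z => Complex.exp ((∑ j, Complex.log (F j z)) / 2), ?_, ?_, ?_⟩
  · apply DifferentiableOn.cexp
    apply DifferentiableOn.div_const
    apply DifferentiableOn.fun_sum
    intro j _
    exact (hFdiff j).clog fun z hz => hFslit z hz j
  · intro z hz
    have hsq2 : Complex.exp ((∑ j, Complex.log (F j z)) / 2) ^ 2 = ∏ j, F j z := by
      rw [sq, ← Complex.exp_add, add_halves, Complex.exp_sum]
      exact Finset.prod_congr rfl fun j _ => Complex.exp_log (hF0 z hz j)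
    rw [hsq2]
    refine Finset.prod_congr rfl fun j _ => ?_
    rw [hinv z hz]
  · have hFt : ∀ j : Fin m, Tendsto (fun z => F j z) l (𝓝 ((A j / B j : ℝ) : ℂ)) := by
      intro j
      have h1 : Tendsto (fun z => (A j : ℂ) - ψ z) l (𝓝 ((A j : ℂ) - 0)) :=
        tendsto_const_nhds.sub hψ0
      have h2 : Tendsto (fun z => (B j : ℂ) - ψ z) l (𝓝 ((B j : ℂ) - 0)) :=
        tendsto_const_nhds.sub hψ0
      have hB0 : ((B j : ℂ) - 0) ≠ 0 := by
        rw [sub_zero]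
        intro h0
        have : B j = 0 := by exact_mod_cast h0
        rcases hAB1 j with ⟨-, h3⟩ | ⟨-, h3⟩ <;> linarith
      have h3 := h1.div h2 hB0
      simp only [sub_zero] at h3
      have : ((A j / B j : ℝ) : ℂ) = (A j : ℂ) / (B j : ℂ) := by push_cast; ring
      rw [this]
      exact h3
    have hlogt : Tendsto (fun z => (∑ j, Complex.log (F j z)) / 2) l
        (𝓝 ((∑ j, Complex.log ((A j / B j : ℝ) : ℂ)) / 2)) := by
      apply Tendsto.div_const
      apply tendsto_finset_sum
      intro j _
      have hslit : ((A j / B j : ℝ) : ℂ) ∈ Complex.slitPlane := by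
        rw [Complex.mem_slitPlane_iff]
        left
        simpa using hcpos j
      exact (hFt j).clog hslit
    have hcomp := (Complex.continuous_exp.tendsto _).comp hlogt
    have hval : Complex.exp ((∑ j, Complex.log ((A j / B j : ℝ) : ℂ)) / 2)
        = ((∏ j, Real.sqrt (A j / B j) : ℝ) : ℂ) := by
      have h1 : ∀ j : Fin m, Complex.log ((A j / B j : ℝ) : ℂ)
          = ((Real.log (A j / B j) : ℝ) : ℂ) :=
        fun j => (Complex.ofReal_log (hcpos j).le).symm
      simp only [h1]
      have h2 : (∑ j, ((Real.log (A j / B j) : ℝ) : ℂ)) / 2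
          = (((∑ j, Real.log (A j / B j)) / 2 : ℝ) : ℂ) := by
        push_cast; ring
      rw [h2, ← Complex.ofReal_exp]
      congr 1
      rw [Finset.sum_div, Real.exp_sum]
      refine Finset.prod_congr rfl fun j _ => ?_
      rw [Real.sqrt_eq_rpow, Real.rpow_def_of_pos (hcpos j)]
      congr 1
      ring
    rw [← hval]
    exact hcomp
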